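/- Let B be a groupoid, and let p : G → B and p' : G' → B be fibrations of groupoids. Then any functor f : G → G' over B (i.e. with p' ∘ f = p) that is an equivalence of groupoids admits a quasi-inverse over B: there exists a functor f' : G' → G with p ∘ f' = p' together with natural isomorphisms f' f ≅ id_G and f f' ≅ id_{G'} whose components all map to identity morphisms under p and p' respectively. -/

import Mathlib

open CategoryTheory

universe u u' u''

/-- A fibration of groupoids: every morphism of the base with target `p.obj e`
lifts to a morphism of the total groupoid with target `e`. -/
def IsGrpdFibration {E : Type*} [Groupoid E] {B : Type*} [Groupoid B] (p : E ⥤ B) : Prop :=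
  ∀ (e : E) (b' : B) (h : b' ⟶ p.obj e),
    ∃ (e' : E) (g : e' ⟶ e) (he : p.obj e' = b'), p.map g = eqToHom he ≫ h

/-- Let `p : G → B` and `p' : G' → B` be fibrations of groupoids.  Any functor
`f : G → G'` over `B` (i.e. `f ⋙ p' = p`) which is an equivalence of groupoids admits a
quasi-inverse over `B`: there is `f' : G' → G` with `f' ⋙ p = p'`, and natural
isomorphisms `f ⋙ f' ≅ 𝟭 G` and `f' ⋙ f ≅ 𝟭 G'` all of whose components are mapped to
identity morphisms by `p` resp. `p'`. -/
theorem equivalence_over_base_of_fibrations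
    {G : Type u} [Groupoid G] {G' : Type u'} [Groupoid G'] {B : Type u''} [Groupoid B]
    (p : G ⥤ B) (p' : G' ⥤ B) (hp : IsGrpdFibration p) (hp' : IsGrpdFibration p')
    (f : G ⥤ G') (hf : f ⋙ p' = p) (hfe : f.IsEquivalence) :
    ∃ f' : G' ⥤ G, f' ⋙ p = p' ∧
      ∃ (η : f ⋙ f' ≅ 𝟭 G) (η' : f' ⋙ f ≅ 𝟭 G'),
        (∀ X : G, ∃ e : p.obj (f'.obj (f.obj X)) = p.obj X,
          p.map (η.hom.app X) = eqToHom e) ∧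
        (∀ Y : G', ∃ e : p'.obj (f.obj (f'.obj Y)) = p'.obj Y,
          p'.map (η'.hom.app Y) = eqToHom e) := by
  let e : G ≌ G' := { f.asEquivalence with functor := f }
  let g := e.inverse
  -- object-level compatibility from hf
  have ho : ∀ X : G, p'.obj (f.obj X) = p.obj X := fun X => Functor.congr_obj hf X
  have hm : ∀ {X Y : G} (ψ : X ⟶ Y),
      p'.map (f.map ψ) = eqToHom (ho X) ≫ p.map ψ ≫ eqToHom (ho Y).symm := by
    intro X Y ψ
    have := Functor.congr_hom hf ψ
    simpa using this
  have hm' : ∀ {X Y : G} (ψ : X ⟶ Y),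
      p.map ψ = eqToHom (ho X).symm ≫ p'.map (f.map ψ) ≫ eqToHom (ho Y) := by
    intro X Y ψ; simp [hm ψ]
  -- base morphisms to lift
  let h : ∀ Y : G', (p'.obj Y ⟶ p.obj (g.obj Y)) :=
    fun Y => inv (p'.map (e.counit.app Y)) ≫ eqToHom (ho (g.obj Y))
  choose ob c hob hc using fun Y => hp (g.obj Y) (p'.obj Y) (h Y)
  let f' : G' ⥤ G :=
    { obj := ob
      map := fun {Y Z} φ => c Y ≫ g.map φ ≫ inv (c Z)
      map_id := by intro Y; simp
      map_comp := by intro X Y Z φ ψ; simp }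
  -- counit naturality in p'
  have hfg : ∀ {Y Z : G'} (φ : Y ⟶ Z),
      p'.map (f.map (g.map φ)) =
        p'.map (e.counit.app Y) ≫ p'.map φ ≫ inv (p'.map (e.counit.app Z)) := by
    intro Y Z φ
    have n : f.map (g.map φ) ≫ e.counit.app Z = e.counit.app Y ≫ φ :=
      e.counit.naturality φ
    have n' := congrArg p'.map n
    rw [p'.map_comp, p'.map_comp] at n'
    rw [← Category.assoc, ← n']
    simp
  have key : ∀ {Y Z : G'} (φ : Y ⟶ Z),
      p.map (c Y ≫ g.map φ ≫ inv (c Z)) = eqToHom (hob Y) ≫ p'.map φ ≫ eqToHom (hob Z).symm := by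
    intro Y Z φ
    simp only [p.map_comp, p.map_inv, hc, hm' (g.map φ), hfg φ, h]
    simp
  have hcomm : f' ⋙ p = p' := by
    refine CategoryTheory.Functor.ext (fun Y => hob Y) (fun Y Z φ => ?_)
    show p.map (c Y ≫ g.map φ ≫ inv (c Z)) = _
    rw [key φ]
  refine ⟨f', hcomm, ?_⟩
  -- the natural isomorphisms
  have ηnat : ∀ {X X' : G} (ψ : X ⟶ X'),
      (f ⋙ f').map ψ ≫ (c (f.obj X') ≫ inv (e.unit.app X')) =
        (c (f.obj X) ≫ inv (e.unit.app X)) ≫ (𝟭 G).map ψ := by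
    intro X X' ψ
    have n : e.unit.app X ≫ g.map (f.map ψ) = ψ ≫ e.unit.app X' :=
      (e.unit.naturality ψ).symm
    show (c (f.obj X) ≫ g.map (f.map ψ) ≫ inv (c (f.obj X'))) ≫ _ = _
    simp only [Category.assoc, IsIso.inv_hom_id_assoc, Functor.id_map]
    rw [cancel_epi (c (f.obj X)), IsIso.comp_inv_eq, Category.assoc, ← n,
      IsIso.inv_hom_id_assoc]
  have η'nat : ∀ {Y Z : G'} (φ : Y ⟶ Z),
      (f' ⋙ f).map φ ≫ (f.map (c Z) ≫ e.counit.app Z) =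
        (f.map (c Y) ≫ e.counit.app Y) ≫ (𝟭 G').map φ := by
    intro Y Z φ
    show f.map (c Y ≫ g.map φ ≫ inv (c Z)) ≫ _ = _
    simp only [f.map_comp, f.map_inv, Category.assoc, IsIso.inv_hom_id_assoc,
      Functor.id_map]
    exact congrArg (f.map (c Y) ≫ ·) (e.counit.naturality φ)
  refine ⟨NatIso.ofComponents (fun X => asIso (c (f.obj X) ≫ inv (e.unit.app X))) ηnat,
    NatIso.ofComponents (fun Y => asIso (f.map (c Y) ≫ e.counit.app Y)) η'nat, ?_, ?_⟩
  · intro X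
    refine ⟨(hob (f.obj X)).trans (ho X), ?_⟩
    show p.map (c (f.obj X) ≫ inv (e.unit.app X)) = _
    have tri : f.map (e.unit.app X) ≫ e.counit.app (f.obj X) = 𝟙 _ :=
      e.functor_unit_comp X
    have tri' := congrArg p'.map tri
    rw [p'.map_comp, p'.map_id] at tri'
    have hu : p'.map (f.map (e.unit.app X)) = inv (p'.map (e.counit.app (f.obj X))) := by
      exact IsIso.eq_inv_of_inv_hom_id tri'
    simp only [p.map_comp, p.map_inv, hc, hm' (e.unit.app X), hu, h]
    simp
  · intro Y
    refine ⟨(ho (ob Y)).trans (hob Y), ?_⟩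
    show p'.map (f.map (c Y) ≫ e.counit.app Y) = _
    rw [p'.map_comp, hm (c Y), hc Y]
    simp [h]
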